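/- For every integer vector v = (v_1,…,v_r) with 0 ≤ v_r < v_{r−1} < ⋯ < v_1 < r+k, one has Σ_{μ∈W_k} S_μ(ζ_v)·S_{μ*}(ζ_v) = exp(2πik|v|/(r+k)) · r(r+k)^{r−1} / D(v). -/

import Mathlib

open scoped BigOperators
open Complex

noncomputable section

namespace VerlindePaper

/-- The Schur value `S_λ(z₁,…,z_r) = det(z_j^{λ_i+r-i}) / det(z_j^{r-i})`
(indices `i` are 0-based, so the exponent is `λ i + (r - 1 - i)`). -/
noncomputable def schur {r : ℕ} (lam : Fin r → ℤ) (z : Fin r → ℂ) : ℂ :=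
  Matrix.det (Matrix.of fun i j : Fin r => z j ^ (lam i + ((r : ℤ) - 1 - (i : ℕ)))) /
    Matrix.det (Matrix.of fun i j : Fin r => z j ^ ((r : ℤ) - 1 - (i : ℕ)))

/-- `ζ_v = (e^{2πi v_1/(r+k)}, …, e^{2πi v_r/(r+k)})`. -/
noncomputable def zeta (r k : ℕ) (v : Fin r → ℤ) : Fin r → ℂ :=
  fun j => Complex.exp (2 * (Real.pi : ℂ) * Complex.I * (v j : ℂ) / ((r : ℂ) + (k : ℂ)))

/-- `D(v) = ∏_{i<j} (2 sin(π(v_i - v_j)/(r+k)))²`. -/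
noncomputable def Dv (r k : ℕ) (v : Fin r → ℤ) : ℝ :=
  ∏ p ∈ Finset.univ.filter (fun p : Fin r × Fin r => p.1 < p.2),
    (2 * Real.sin (Real.pi * ((v p.1 : ℝ) - (v p.2 : ℝ)) / ((r : ℝ) + (k : ℝ)))) ^ 2

/-- `P̄_k = {μ : 0 ≤ μ_r ≤ ⋯ ≤ μ_1 ≤ k}` (0-based: `μ 0 = μ_1`). -/
def Pbar (r k : ℕ) : Finset (Fin r → ℤ) :=
  (Finset.Icc 0 (fun _ => (k : ℤ))).filter (fun μ => ∀ i j : Fin r, i ≤ j → μ j ≤ μ i)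

/-- `P_k = {μ : 0 ≤ μ_r ≤ ⋯ ≤ μ_1 ≤ k-1}`. -/
def Pk (r k : ℕ) : Finset (Fin r → ℤ) :=
  (Finset.Icc 0 (fun _ => (k : ℤ) - 1)).filter (fun μ => ∀ i j : Fin r, i ≤ j → μ j ≤ μ i)

/-- `W_k = {μ ∈ P̄_k : μ_r = 0}`. -/
def Wk (r k : ℕ) : Finset (Fin r → ℤ) :=
  (Pbar r k).filter (fun μ => ∀ i : Fin r, (i : ℕ) = r - 1 → μ i = 0)

/-- `μ* = (k - μ_r, k - μ_{r-1}, …, k - μ_1)`. -/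
def mustar (k : ℕ) {r : ℕ} (μ : Fin r → ℤ) : Fin r → ℤ :=
  fun i => (k : ℤ) - μ i.rev

/-- `μ ∼ ν` iff `μ - ν` is a constant vector. -/
def sim {r : ℕ} (μ ν : Fin r → ℤ) : Prop := ∃ a : ℤ, ∀ i, μ i = ν i + a

/-- The index set of the Verlinde sums: integer vectors with
`0 = v_r < v_{r-1} < ⋯ < v_1 < r + k`. -/
def Vset (r k : ℕ) : Finset (Fin r → ℤ) :=
  (Finset.Icc 0 (fun _ => (r : ℤ) + (k : ℤ) - 1)).filter
    (fun v => (∀ i j : Fin r, i < j → v j < v i) ∧ ∀ i : Fin r, (i : ℕ) = r - 1 → v i = 0)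

/-- The Verlinde number `V_g(r,d,(λ_x)_{x∈I})`. -/
noncomputable def verlinde (r k : ℕ) (g : ℕ) (d : ℤ) {I : Type*} [Fintype I]
    (lam : I → Fin r → ℤ) : ℂ :=
  (-1 : ℂ) ^ (d * ((r : ℤ) - 1)) * ((k : ℂ) / (r : ℂ)) ^ g *
    ((r : ℂ) * ((r : ℂ) + (k : ℂ)) ^ (r - 1)) ^ ((g : ℤ) - 1) *
    ∑ v ∈ Vset r k,
      Complex.exp (2 * (Real.pi : ℂ) * Complex.I *
          ((d : ℂ) / (r : ℂ) -
            (∑ x, ∑ i, (lam x i : ℂ)) / ((r : ℂ) * ((r : ℂ) + (k : ℂ)))) *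
          (∑ i, (v i : ℂ))) *
        (∏ x, schur (lam x) (zeta r k v)) * ((Dv r k v : ℂ)) ^ (1 - (g : ℤ))

/-- The Hecke transformation
`H¹(μ) = (k - μ_{r-1} + μ_r, μ_1 - μ_{r-1}, …, μ_{r-2} - μ_{r-1}, 0)`. -/
def H1 (k : ℕ) {r : ℕ} (μ : Fin r → ℤ) : Fin r → ℤ := fun j =>
  have hj : (j : ℕ) < r := j.isLt
  if (j : ℕ) = 0 then (k : ℤ) - μ ⟨r - 2, by omega⟩ + μ ⟨r - 1, by omega⟩
  else μ ⟨(j : ℕ) - 1, by omega⟩ - μ ⟨r - 2, by omega⟩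

/-- The iterated Hecke transformation `H^m = H¹ ∘ ⋯ ∘ H¹`. -/
def Hm (k : ℕ) {r : ℕ} (m : ℕ) (μ : Fin r → ℤ) : Fin r → ℤ := (H1 k)^[m] μ

/-- `μ ∈ Y(λ, ω_s)`: `μ` is a partition obtained from `λ` by adding `s` boxes,
no two in the same row. -/
def inY {r : ℕ} (lam : Fin r → ℤ) (s : ℕ) (μ : Fin r → ℤ) : Prop :=
  (∀ i j : Fin r, i ≤ j → μ j ≤ μ i) ∧ (∀ i, μ i - lam i = 0 ∨ μ i - lam i = 1) ∧
    (∑ i, μ i) = (∑ i, lam i) + (s : ℤ)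

/-- The Vandermonde product `Δ(z) = ∏_{i<j} (z_i - z_j)`. -/
noncomputable def vand {r : ℕ} (z : Fin r → ℂ) : ℂ :=
  ∏ p ∈ Finset.univ.filter (fun p : Fin r × Fin r => p.1 < p.2), (z p.1 - z p.2)

/-- `J_v(t) = Σ_{τ ∈ S_r} sgn(τ) exp(2πi (Σ_j v_{τ(j)} t_j)/(r+k))`. -/
noncomputable def Jv (r k : ℕ) (v : Fin r → ℤ) (t : Fin r → Fin (r + k)) : ℂ :=
  ∑ τ : Equiv.Perm (Fin r), ((Equiv.Perm.sign τ : ℤ) : ℂ) *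
    Complex.exp (2 * (Real.pi : ℂ) * Complex.I *
      (∑ j, (v (τ j) : ℂ) * ((t j : ℕ) : ℂ)) / ((r : ℂ) + (k : ℂ)))


section Aux1
variable {r k : ℕ} {v : Fin r → ℤ}

lemma ncast_ne (hr : 1 ≤ r) : ((r:ℂ)+(k:ℂ)) ≠ 0 := by
  have : ((r+k : ℕ) : ℂ) ≠ 0 := Nat.cast_ne_zero.2 (by omega)
  push_cast at this; exact this

lemma zeta_ne_zero (j : Fin r) : zeta r k v j ≠ 0 := Complex.exp_ne_zero _

lemma zeta_pow_n (hr : 1 ≤ r) (j : Fin r) : zeta r k v j ^ (r+k) = 1 := by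
  have h : ((r:ℂ)+(k:ℂ)) ≠ 0 := ncast_ne hr
  rw [zeta, ← Complex.exp_nat_mul]
  rw [show ((r+k : ℕ):ℂ) * (2 * (Real.pi : ℂ) * Complex.I * ((v j : ℤ) : ℂ) / ((r : ℂ) + (k : ℂ)))
      = ((v j : ℤ) : ℂ) * (2 * (Real.pi:ℂ) * Complex.I) by push_cast; field_simp]
  exact Complex.exp_int_mul_two_pi_mul_I _

lemma conj_zeta (j : Fin r) :
    (starRingEnd ℂ) (zeta r k v j) = (zeta r k v j)⁻¹ := by
  rw [zeta, ← Complex.exp_conj, ← Complex.exp_neg]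
  congr 1
  simp only [map_div₀, map_mul, Complex.conj_I, map_ofNat, Complex.conj_ofReal,
    map_intCast, map_natCast, map_add]
  ring

lemma zeta_mul_conj (j : Fin r) : zeta r k v j * (starRingEnd ℂ) (zeta r k v j) = 1 := by
  rw [conj_zeta, mul_inv_cancel₀ (zeta_ne_zero j)]

lemma zeta_inj (hr : 1 ≤ r)
    (hdec : ∀ i j : Fin r, i < j → v j < v i)
    (hlow : ∀ i, 0 ≤ v i) (hhigh : ∀ i, v i < (r : ℤ) + (k : ℤ)) :
    Function.Injective (zeta r k v) := by
  intro i j hij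
  by_contra hne
  rw [zeta] at hij
  rw [show zeta r k v j = Complex.exp (2 * (Real.pi : ℂ) * Complex.I * (v j : ℂ) / ((r : ℂ) + (k : ℂ))) from rfl] at hij
  rw [Complex.exp_eq_exp_iff_exists_int] at hij
  obtain ⟨m, hm⟩ := hij
  have h2 : (2 * (Real.pi:ℂ) * Complex.I) ≠ 0 := by
    simp [Real.pi_ne_zero, Complex.I_ne_zero]
  have hn := ncast_ne (k := k) hr
  have h1 : (2*(Real.pi:ℂ)*Complex.I) * ((v i : ℂ) / ((r:ℂ)+(k:ℂ)))
      = (2*(Real.pi:ℂ)*Complex.I) * ((v j : ℂ)/((r:ℂ)+(k:ℂ)) + m) := by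
    linear_combination hm
  have h3 := mul_left_cancel₀ h2 h1
  have h4 : (v i : ℂ) = (v j : ℂ) + m * ((r:ℂ)+(k:ℂ)) := by
    field_simp at h3
    linear_combination h3
  have h5 : v i = v j + m * ((r:ℤ)+(k:ℤ)) := by exact_mod_cast h4
  have hij' : v i ≠ v j := by
    rcases lt_or_gt_of_ne hne with h | h
    · exact ne_of_gt (hdec i j h)
    · exact ne_of_lt (hdec j i h)
  have := hlow i; have := hhigh i; have := hlow j; have := hhigh j
  rcases lt_trichotomy m 0 with h | h | h
  · nlinarith [hlow i, hhigh j, h5]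
  · simp [h] at h5; exact hij' h5
  · nlinarith [hhigh i, hlow j, h5]

lemma sum_char [NeZero (r+k)] (hr : 1 ≤ r) (hk : 1 ≤ k)
    (hdec : ∀ i j : Fin r, i < j → v j < v i)
    (hlow : ∀ i, 0 ≤ v i) (hhigh : ∀ i, v i < (r : ℤ) + (k : ℤ)) (j l : Fin r) :
    ∑ a : ZMod (r+k), zeta r k v j ^ a.val * (starRingEnd ℂ) (zeta r k v l ^ a.val)
      = if j = l then ((r+k : ℕ) : ℂ) else 0 := by
  set w : ℂ := zeta r k v j * (starRingEnd ℂ) (zeta r k v l) with hw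
  have hterm : ∀ a : ZMod (r+k),
      zeta r k v j ^ a.val * (starRingEnd ℂ) (zeta r k v l ^ a.val) = w ^ a.val := by
    intro a; rw [map_pow, hw, mul_pow]
  simp only [hterm]
  have hre : ∑ a : ZMod (r+k), w ^ a.val = ∑ m ∈ Finset.range (r+k), w ^ m := by
    refine Finset.sum_nbij' (fun a => a.val) (fun m => (m : ZMod (r+k))) ?_ ?_ ?_ ?_ ?_
    · intro a _; exact Finset.mem_range.2 (ZMod.val_lt a)
    · intro m _; exact Finset.mem_univ _
    · intro a _; exact ZMod.natCast_rightInverse a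
    · intro m hm; exact ZMod.val_cast_of_lt (Finset.mem_range.1 hm)
    · intro a _; rfl
  rw [hre]
  by_cases hjl : j = l
  · subst hjl
    simp [hw, zeta_mul_conj j]
  · rw [if_neg hjl]
    have hwn : w ^ (r+k) = 1 := by
      rw [hw, mul_pow, zeta_pow_n hr, ← map_pow, zeta_pow_n hr, map_one, one_mul]
    have hw1 : w ≠ 1 := by
      intro h
      apply hjl
      apply zeta_inj hr hdec hlow hhigh
      have := conj_zeta (r := r) (k := k) (v := v) l
      rw [hw, this] at h
      field_simp at h
      exact (div_eq_one_iff_eq (zeta_ne_zero l)).mp h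
    rw [geom_sum_eq hw1, hwn, sub_self, zero_div]

/-- the determinant function -/

noncomputable def gdet (r k : ℕ) (v : Fin r → ℤ) (t : Fin r → ZMod (r+k)) : ℂ :=
  Matrix.det (Matrix.of fun i j : Fin r => zeta r k v j ^ (t i).val)

lemma gdet_eq_sum (t : Fin r → ZMod (r+k)) :
    gdet r k v t = ∑ σ : Equiv.Perm (Fin r),
      ((Equiv.Perm.sign σ : ℤ) : ℂ) * ∏ i, zeta r k v (σ i) ^ (t i).val := by
  rw [gdet, ← Matrix.det_transpose, Matrix.det_apply']
  rfl

lemma sign_sq (σ : Equiv.Perm (Fin r)) :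
    ((Equiv.Perm.sign σ : ℤ) : ℂ) * ((Equiv.Perm.sign σ : ℤ) : ℂ) = 1 := by
  rw [← Int.cast_mul, ← Units.val_mul, Int.units_mul_self]; simp

lemma sum_all [NeZero (r+k)] (hr : 1 ≤ r) (hk : 1 ≤ k)
    (hdec : ∀ i j : Fin r, i < j → v j < v i)
    (hlow : ∀ i, 0 ≤ v i) (hhigh : ∀ i, v i < (r : ℤ) + (k : ℤ)) :
    ∑ t : Fin r → ZMod (r+k), gdet r k v t * (starRingEnd ℂ) (gdet r k v t)
      = (Nat.factorial r : ℂ) * ((r+k : ℕ) : ℂ) ^ r := by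
  have key : ∀ σ τ : Equiv.Perm (Fin r),
      (∑ t : Fin r → ZMod (r+k), ∏ i, (zeta r k v (σ i) ^ (t i).val *
        (starRingEnd ℂ) (zeta r k v (τ i) ^ (t i).val)))
      = if σ = τ then ((r+k:ℕ):ℂ)^r else 0 := by
    intro σ τ
    have hps := Finset.prod_univ_sum (fun _ : Fin r => (Finset.univ : Finset (ZMod (r+k))))
      (fun i a => zeta r k v (σ i) ^ a.val * (starRingEnd ℂ) (zeta r k v (τ i) ^ a.val))
    rw [← Fintype.piFinset_univ, ← hps]
    have h1 : ∀ i : Fin r, (∑ a : ZMod (r+k), zeta r k v (σ i) ^ a.val *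
        (starRingEnd ℂ) (zeta r k v (τ i) ^ a.val)) = if σ i = τ i then ((r+k:ℕ):ℂ) else 0 :=
      fun i => sum_char hr hk hdec hlow hhigh _ _
    rw [Finset.prod_congr rfl (fun i _ => h1 i)]
    by_cases h : σ = τ
    · subst h; simp
    · rw [if_neg h]
      obtain ⟨i, hi⟩ : ∃ i, σ i ≠ τ i := by
        by_contra hc; push_neg at hc; exact h (Equiv.ext hc)
      exact Finset.prod_eq_zero (Finset.mem_univ i) (by simp [hi])
  have expand : ∀ t : Fin r → ZMod (r+k), gdet r k v t * (starRingEnd ℂ) (gdet r k v t)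
      = ∑ σ : Equiv.Perm (Fin r), ∑ τ : Equiv.Perm (Fin r),
          (((Equiv.Perm.sign σ : ℤ):ℂ) * ((Equiv.Perm.sign τ : ℤ):ℂ)) *
          ∏ i, (zeta r k v (σ i) ^ (t i).val *
            (starRingEnd ℂ) (zeta r k v (τ i) ^ (t i).val)) := by
    intro t
    rw [gdet_eq_sum, map_sum, Finset.sum_mul_sum]
    refine Finset.sum_congr rfl (fun σ _ => Finset.sum_congr rfl (fun τ _ => ?_))
    rw [map_mul, map_intCast, map_prod, mul_mul_mul_comm, ← Finset.prod_mul_distrib]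
  simp only [expand]
  rw [Finset.sum_comm]
  have swap2 : ∀ σ : Equiv.Perm (Fin r),
      (∑ t : Fin r → ZMod (r+k), ∑ τ : Equiv.Perm (Fin r),
        (((Equiv.Perm.sign σ : ℤ):ℂ) * ((Equiv.Perm.sign τ : ℤ):ℂ)) *
          ∏ i, (zeta r k v (σ i) ^ (t i).val *
            (starRingEnd ℂ) (zeta r k v (τ i) ^ (t i).val)))
      = ∑ τ : Equiv.Perm (Fin r),
        (((Equiv.Perm.sign σ : ℤ):ℂ) * ((Equiv.Perm.sign τ : ℤ):ℂ)) *
          ∑ t : Fin r → ZMod (r+k), ∏ i, (zeta r k v (σ i) ^ (t i).val *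
            (starRingEnd ℂ) (zeta r k v (τ i) ^ (t i).val)) := by
    intro σ
    rw [Finset.sum_comm]
    exact Finset.sum_congr rfl (fun τ _ => by rw [← Finset.mul_sum])
  rw [Finset.sum_congr rfl (fun σ _ => swap2 σ)]
  have final : ∀ σ : Equiv.Perm (Fin r),
      (∑ τ : Equiv.Perm (Fin r),
        (((Equiv.Perm.sign σ : ℤ):ℂ) * ((Equiv.Perm.sign τ : ℤ):ℂ)) *
          ∑ t : Fin r → ZMod (r+k), ∏ i, (zeta r k v (σ i) ^ (t i).val *
            (starRingEnd ℂ) (zeta r k v (τ i) ^ (t i).val)))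
      = ((r+k:ℕ):ℂ)^r := by
    intro σ
    have : ∀ τ : Equiv.Perm (Fin r),
        (((Equiv.Perm.sign σ : ℤ):ℂ) * ((Equiv.Perm.sign τ : ℤ):ℂ)) *
          (∑ t : Fin r → ZMod (r+k), ∏ i, (zeta r k v (σ i) ^ (t i).val *
            (starRingEnd ℂ) (zeta r k v (τ i) ^ (t i).val)))
        = if σ = τ then ((r+k:ℕ):ℂ)^r else 0 := by
      intro τ
      rw [key σ τ]
      by_cases h : σ = τ
      · subst h; rw [if_pos rfl, sign_sq, one_mul]
      · rw [if_neg h, mul_zero]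
    rw [Finset.sum_congr rfl (fun τ _ => this τ)]
    rw [Finset.sum_ite_eq]
    simp
  rw [Finset.sum_congr rfl (fun σ _ => final σ), Finset.sum_const]
  simp [Finset.card_univ, Fintype.card_perm, mul_comm]

lemma gdet_perm (t : Fin r → ZMod (r+k)) (π : Equiv.Perm (Fin r)) :
    gdet r k v (t ∘ π) = ((Equiv.Perm.sign π : ℤ) : ℂ) * gdet r k v t := by
  have h : (Matrix.of fun i j : Fin r => zeta r k v j ^ ((t ∘ π) i).val)
      = (Matrix.of fun i j : Fin r => zeta r k v j ^ (t i).val).submatrix π id := rfl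
  rw [gdet, h, Matrix.det_permute, gdet]

lemma gdet_shift [NeZero (r+k)] (hr : 1 ≤ r) (t : Fin r → ZMod (r+k)) (c : ZMod (r+k)) :
    gdet r k v (fun i => t i + c) = (∏ j, zeta r k v j ^ c.val) * gdet r k v t := by
  have h : ∀ (i j : Fin r), zeta r k v j ^ ((t i + c).val)
      = zeta r k v j ^ c.val * zeta r k v j ^ (t i).val := by
    intro i j
    rw [ZMod.val_add, ← pow_eq_pow_mod _ (zeta_pow_n hr j), pow_add, mul_comm]
  rw [gdet]
  rw [show (Matrix.of fun i j : Fin r => zeta r k v j ^ ((t i + c).val))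
      = Matrix.of (fun i j : Fin r => (fun l => zeta r k v l ^ c.val) j *
          (Matrix.of fun i j : Fin r => zeta r k v j ^ (t i).val) i j) by
    ext i j; exact h i j]
  rw [Matrix.det_mul_row, gdet]

lemma gdet_zero {t : Fin r → ZMod (r+k)} (h : ¬ Function.Injective t) :
    gdet r k v t = 0 := by
  simp only [Function.Injective, not_forall] at h
  obtain ⟨i, j, hij, hne⟩ := h
  refine Matrix.det_zero_of_row_eq hne ?_
  funext l
  simp only [Matrix.of_apply, hij]

def Ffun (r k : ℕ) (v : Fin r → ℤ) (t : Fin r → ZMod (r+k)) : ℂ :=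
  gdet r k v t * (starRingEnd ℂ) (gdet r k v t)

lemma Ffun_perm (t : Fin r → ZMod (r+k)) (π : Equiv.Perm (Fin r)) :
    Ffun r k v (t ∘ π) = Ffun r k v t := by
  rw [Ffun, gdet_perm, map_mul, map_intCast, Ffun]
  have := sign_sq (r := r) π
  calc ((Equiv.Perm.sign π : ℤ) : ℂ) * gdet r k v t *
        (((Equiv.Perm.sign π : ℤ) : ℂ) * (starRingEnd ℂ) (gdet r k v t))
      = (((Equiv.Perm.sign π : ℤ) : ℂ) * ((Equiv.Perm.sign π : ℤ) : ℂ)) *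
        (gdet r k v t * (starRingEnd ℂ) (gdet r k v t)) := by ring
    _ = gdet r k v t * (starRingEnd ℂ) (gdet r k v t) := by rw [this, one_mul]

lemma Ffun_shift [NeZero (r+k)] (hr : 1 ≤ r) (t : Fin r → ZMod (r+k)) (c : ZMod (r+k)) :
    Ffun r k v (fun i => t i + c) = Ffun r k v t := by
  rw [Ffun, gdet_shift hr, map_mul, map_prod, Ffun]
  calc ((∏ j, zeta r k v j ^ c.val) * gdet r k v t) *
        ((∏ j, (starRingEnd ℂ) (zeta r k v j ^ c.val)) * (starRingEnd ℂ) (gdet r k v t))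
      = (∏ j, (zeta r k v j ^ c.val * (starRingEnd ℂ) (zeta r k v j ^ c.val))) *
        (gdet r k v t * (starRingEnd ℂ) (gdet r k v t)) := by
        rw [Finset.prod_mul_distrib]; ring
    _ = gdet r k v t * (starRingEnd ℂ) (gdet r k v t) := by
        have : ∀ j : Fin r, zeta r k v j ^ c.val * (starRingEnd ℂ) (zeta r k v j ^ c.val) = 1 := by
          intro j; rw [map_pow, ← mul_pow, zeta_mul_conj, one_pow]
        rw [Finset.prod_congr rfl (fun j _ => this j), Finset.prod_const_one, one_mul]

lemma Ffun_zero {t : Fin r → ZMod (r+k)} (h : ¬ Function.Injective t) :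
    Ffun r k v t = 0 := by rw [Ffun, gdet_zero h, zero_mul]

lemma sum_slice [NeZero (r+k)] (hr : 1 ≤ r) (hk : 1 ≤ k)
    (hdec : ∀ i j : Fin r, i < j → v j < v i)
    (hlow : ∀ i, 0 ≤ v i) (hhigh : ∀ i, v i < (r : ℤ) + (k : ℤ)) (i₀ : Fin r) :
    ∑ t ∈ Finset.univ.filter (fun t : Fin r → ZMod (r+k) => t i₀ = 0), Ffun r k v t
      = (Nat.factorial r : ℂ) * ((r+k : ℕ) : ℂ) ^ (r-1) := by
  have hslice : ∀ c : ZMod (r+k),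
      ∑ t ∈ Finset.univ.filter (fun t : Fin r → ZMod (r+k) => t i₀ = c), Ffun r k v t
      = ∑ t ∈ Finset.univ.filter (fun t : Fin r → ZMod (r+k) => t i₀ = 0), Ffun r k v t := by
    intro c
    refine Finset.sum_nbij' (fun t => fun i => t i - c) (fun t => fun i => t i + c)
      ?_ ?_ ?_ ?_ ?_
    · intro t ht
      simp only [Finset.mem_filter, Finset.mem_univ, true_and] at ht ⊢
      rw [ht, sub_self]
    · intro t ht
      simp only [Finset.mem_filter, Finset.mem_univ, true_and] at ht ⊢
      rw [ht, zero_add]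
    · intro t _; funext i; simp
    · intro t _; funext i; simp
    · intro t ht
      simp only [Finset.mem_filter, Finset.mem_univ, true_and] at ht
      have : t = (fun i => (fun i => t i - c) i + c) := by funext i; simp
      conv_lhs => rw [this]
      exact (Ffun_shift hr _ c)
  have htot : ∑ c : ZMod (r+k),
      (∑ t ∈ Finset.univ.filter (fun t : Fin r → ZMod (r+k) => t i₀ = c), Ffun r k v t)
      = (Nat.factorial r : ℂ) * ((r+k : ℕ) : ℂ) ^ r := by
    rw [Finset.sum_fiberwise Finset.univ (fun t : Fin r → ZMod (r+k) => t i₀) (Ffun r k v)]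
    exact sum_all hr hk hdec hlow hhigh
  rw [Finset.sum_congr rfl (fun c _ => hslice c)] at htot
  rw [Finset.sum_const, Finset.card_univ, ZMod.card] at htot
  have hn0 : ((r+k : ℕ) : ℂ) ≠ 0 := Nat.cast_ne_zero.2 (by omega)
  obtain ⟨m, hm⟩ : ∃ m, r = m + 1 := ⟨r - 1, by omega⟩
  set a := ((r+k:ℕ):ℂ) with ha
  have hpow : a ^ r = a * a ^ (r-1) := by
    rw [hm, Nat.add_sub_cancel, pow_succ]; ring
  rw [hpow] at htot
  rw [nsmul_eq_mul] at htot
  apply mul_left_cancel₀ hn0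
  rw [htot]; ring

lemma sum_T [NeZero (r+k)] (hr : 1 ≤ r) (hk : 1 ≤ k)
    (hdec : ∀ i j : Fin r, i < j → v j < v i)
    (hlow : ∀ i, 0 ≤ v i) (hhigh : ∀ i, v i < (r : ℤ) + (k : ℤ)) :
    ∑ t ∈ Finset.univ.filter
        (fun t : Fin r → ZMod (r+k) => Function.Injective t ∧ ∃ i, t i = 0),
      Ffun r k v t
      = (r : ℂ) * (Nat.factorial r : ℂ) * ((r+k : ℕ) : ℂ) ^ (r-1) := by
  have h1 : ∑ i : Fin r, (∑ t ∈ Finset.univ.filter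
        (fun t : Fin r → ZMod (r+k) => t i = 0), Ffun r k v t)
      = (r : ℂ) * (Nat.factorial r : ℂ) * ((r+k : ℕ) : ℂ) ^ (r-1) := by
    rw [Finset.sum_congr rfl (fun i _ => sum_slice hr hk hdec hlow hhigh i),
      Finset.sum_const, Finset.card_univ, Fintype.card_fin, nsmul_eq_mul]
    ring
  rw [← h1]
  have h2 : ∀ i : Fin r, (∑ t ∈ Finset.univ.filter
        (fun t : Fin r → ZMod (r+k) => t i = 0), Ffun r k v t)
      = ∑ t : Fin r → ZMod (r+k), if t i = 0 then Ffun r k v t else 0 :=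
    fun i => Finset.sum_filter _ _
  rw [Finset.sum_congr rfl (fun i _ => h2 i), Finset.sum_comm]
  rw [Finset.sum_filter]
  refine Finset.sum_congr rfl (fun t _ => ?_)
  symm
  by_cases hinj : Function.Injective t
  · by_cases hex : ∃ i, t i = 0
    · obtain ⟨i₀, hi₀⟩ := hex
      have hfilter : Finset.univ.filter (fun i => t i = 0) = {i₀} := by
        ext j
        simp only [Finset.mem_filter, Finset.mem_univ, true_and, Finset.mem_singleton]
        constructor
        · intro hj; exact hinj (by rw [hj, hi₀])
        · intro hj; rw [hj, hi₀]
      calc (∑ i : Fin r, if t i = 0 then Ffun r k v t else 0)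
          = ∑ i ∈ Finset.univ.filter (fun i => t i = 0), Ffun r k v t :=
            (Finset.sum_filter _ _).symm
        _ = Ffun r k v t := by rw [hfilter, Finset.sum_singleton]
        _ = if Function.Injective t ∧ ∃ i, t i = 0 then Ffun r k v t else 0 := by
            rw [if_pos ⟨hinj, ⟨i₀, hi₀⟩⟩]
    · have : ∀ i : Fin r, (if t i = 0 then Ffun r k v t else 0) = 0 := by
        intro i
        rw [if_neg (fun h => hex ⟨i, h⟩)]
      rw [Finset.sum_congr rfl (fun i _ => this i), Finset.sum_const_zero,
        if_neg (fun h => hex h.2)]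
  · have hF := Ffun_zero (v := v) hinj
    rw [hF]
    simp

def eexp (r : ℕ) (μ : Fin r → ℤ) : Fin r → ℤ := fun i => μ i + ((r:ℤ) - 1 - (i:ℕ))

def tmu (r k : ℕ) (μ : Fin r → ℤ) : Fin r → ZMod (r+k) := fun i => ((eexp r μ i : ℤ) : ZMod (r+k))

lemma Wk_prop {μ : Fin r → ℤ} (hμ : μ ∈ Wk r k) :
    (∀ i, 0 ≤ μ i) ∧ (∀ i, μ i ≤ k) ∧ (∀ i j : Fin r, i ≤ j → μ j ≤ μ i) ∧
      (∀ i : Fin r, (i : ℕ) = r - 1 → μ i = 0) := by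
  rw [Wk, Finset.mem_filter, Pbar, Finset.mem_filter, Finset.mem_Icc] at hμ
  obtain ⟨⟨⟨h1, h2⟩, h3⟩, h4⟩ := hμ
  exact ⟨fun i => h1 i, fun i => h2 i, h3, h4⟩

lemma eexp_bounds {μ : Fin r → ℤ} (hμ : μ ∈ Wk r k) (i : Fin r) :
    0 ≤ eexp r μ i ∧ eexp r μ i < (r:ℤ) + k := by
  obtain ⟨h1, h2, h3, h4⟩ := Wk_prop hμ
  have hi := i.isLt
  constructor
  · have := h1 i; rw [eexp]; omega
  · have := h2 i; rw [eexp]; omega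

lemma eexp_anti {μ : Fin r → ℤ} (hμ : μ ∈ Wk r k) {i j : Fin r} (h : i < j) :
    eexp r μ j < eexp r μ i := by
  obtain ⟨h1, h2, h3, h4⟩ := Wk_prop hμ
  have := h3 i j (le_of_lt h)
  have hij : (i:ℕ) < (j:ℕ) := h
  rw [eexp, eexp]; omega

lemma tmu_val' [NeZero (r+k)] {μ : Fin r → ℤ}
    (hb : ∀ i, 0 ≤ eexp r μ i ∧ eexp r μ i < (r:ℤ)+k) (i : Fin r) :
    (tmu r k μ i).val = (eexp r μ i).toNat := by
  obtain ⟨h0, hlt⟩ := hb i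
  have hcast : ((eexp r μ i : ℤ) : ZMod (r+k)) = (((eexp r μ i).toNat : ℕ) : ZMod (r+k)) := by
    rw [← Int.toNat_of_nonneg h0]; push_cast; rfl
  rw [tmu, hcast, ZMod.val_cast_of_lt]
  omega

lemma tmu_val [NeZero (r+k)] {μ : Fin r → ℤ} (hμ : μ ∈ Wk r k) (i : Fin r) :
    (tmu r k μ i).val = (eexp r μ i).toNat :=
  tmu_val' (fun i => eexp_bounds hμ i) i

lemma tmu_inj [NeZero (r+k)] {μ : Fin r → ℤ} (hμ : μ ∈ Wk r k) :
    Function.Injective (tmu r k μ) := by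
  intro i j hij
  by_contra hne
  have hvals : (eexp r μ i).toNat = (eexp r μ j).toNat := by
    rw [← tmu_val hμ, ← tmu_val hμ, hij]
  have h1 := eexp_bounds hμ i; have h2 := eexp_bounds hμ j
  have : eexp r μ i = eexp r μ j := by omega
  rcases lt_or_gt_of_ne hne with h | h
  · exact absurd this (ne_of_gt (eexp_anti hμ h))
  · exact absurd this (ne_of_lt (eexp_anti hμ h))

lemma strictMono_gap (s : Fin r → ℕ) (hs : StrictMono s) :
    ∀ (d : ℕ) (a b : Fin r), (a:ℕ) + d = (b:ℕ) → s a + d ≤ s b := by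
  intro d
  induction d with
  | zero =>
    intro a b h
    have : a = b := Fin.ext (by omega)
    subst this; omega
  | succ m ih =>
    intro a b h
    have hb : (a:ℕ) + m < r := by have := b.isLt; omega
    set b' : Fin r := ⟨(a:ℕ) + m, hb⟩ with hb'
    have h1 := ih a b' rfl
    have h2 : s b' < s b := hs (by rw [Fin.lt_def]; simp [hb']; omega)
    omega

lemma tmu_last [NeZero (r+k)] (hr : 1 ≤ r) {μ : Fin r → ℤ} (hμ : μ ∈ Wk r k) :
    tmu r k μ ⟨r-1, by omega⟩ = 0 := by
  obtain ⟨h1, h2, h3, h4⟩ := Wk_prop hμ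
  have hlast : μ ⟨r-1, by omega⟩ = 0 := h4 _ rfl
  have : eexp r μ ⟨r-1, by omega⟩ = 0 := by
    rw [eexp, hlast]
    have : ((⟨r-1, by omega⟩ : Fin r) : ℕ) = r - 1 := rfl
    rw [this]; push_cast; omega
  rw [tmu, this]; simp

noncomputable def sortinv (r k : ℕ) (t : Fin r → ZMod (r+k)) :
    (Fin r → ℤ) × Equiv.Perm (Fin r) :=
  let σ := Tuple.sort (fun i => (t i).val)
  (fun i => (((t (σ i.rev)).val : ℕ) : ℤ) - ((r:ℤ) - 1 - (i:ℕ)),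
   σ⁻¹.trans (Fin.revPerm))

lemma sum_Wk_aux [NeZero (r+k)] (hr : 1 ≤ r) (hk : 1 ≤ k)
    (hdec : ∀ i j : Fin r, i < j → v j < v i)
    (hlow : ∀ i, 0 ≤ v i) (hhigh : ∀ i, v i < (r : ℤ) + (k : ℤ)) :
    ∑ p ∈ (Wk r k) ×ˢ (Finset.univ : Finset (Equiv.Perm (Fin r))),
      Ffun r k v (tmu r k p.1 ∘ p.2)
      = (r : ℂ) * (Nat.factorial r : ℂ) * ((r+k : ℕ) : ℂ) ^ (r-1) := by
  rw [← sum_T hr hk hdec hlow hhigh]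
  refine Finset.sum_nbij' (fun p => tmu r k p.1 ∘ p.2) (sortinv r k) ?_ ?_ ?_ ?_ ?_
  · -- maps into T
    rintro ⟨μ, π⟩ hp
    rw [Finset.mem_product] at hp
    obtain ⟨hμ, -⟩ := hp
    rw [Finset.mem_filter]
    refine ⟨Finset.mem_univ _, (tmu_inj hμ).comp π.injective, ?_⟩
    refine ⟨π⁻¹ ⟨r-1, by omega⟩, ?_⟩
    simp only [Function.comp_apply, Equiv.Perm.coe_inv, Equiv.apply_symm_apply]
    exact tmu_last hr hμ
  · -- sortinv maps into Wk ×ˢ univ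
    intro t ht
    rw [Finset.mem_filter] at ht
    obtain ⟨-, hinj, i₀, hi₀⟩ := ht
    rw [Finset.mem_product]
    refine ⟨?_, Finset.mem_univ _⟩
    -- setup
    set w : Fin r → ℕ := fun i => (t i).val with hw
    have hwinj : Function.Injective w := fun a b hab => hinj (ZMod.val_injective _ hab)
    set σ := Tuple.sort w with hσ
    have hmono : Monotone (w ∘ σ) := Tuple.monotone_sort w
    have hsm : StrictMono (w ∘ σ) :=
      hmono.strictMono_of_injective (hwinj.comp σ.injective)
    set s : Fin r → ℕ := w ∘ σ with hs
    have hzero : s ⟨0, by omega⟩ = 0 := by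
      have h1 : w i₀ = 0 := by rw [hw]; simp [hi₀]
      have h2 : s (σ⁻¹ i₀) = 0 := by rw [hs]; simp [h1]
      have h3 : s ⟨0, by omega⟩ ≤ s (σ⁻¹ i₀) := hmono (Fin.mk_le_of_le_val (by omega))
      omega
    have hub : ∀ i : Fin r, s i < r + k := fun i => ZMod.val_lt _
    -- μ' ∈ Wk
    have hμ'def : (sortinv r k t).1 = fun i : Fin r =>
        ((s i.rev : ℕ) : ℤ) - ((r:ℤ) - 1 - (i:ℕ)) := rfl
    rw [Wk, Finset.mem_filter, Pbar, Finset.mem_filter, Finset.mem_Icc, hμ'def]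
    have hrev : ∀ i : Fin r, ((i.rev : ℕ)) = r - 1 - (i:ℕ) := by
      intro i; rw [Fin.val_rev]; omega
    have hlb : ∀ i : Fin r, (i:ℕ) ≤ s i := by
      intro i
      have := strictMono_gap s hsm (i:ℕ) ⟨0, by omega⟩ i (by simp)
      omega
    have hub2 : ∀ i : Fin r, s i + (r - 1 - (i:ℕ)) ≤ r + k - 1 := by
      intro i
      have := strictMono_gap s hsm (r - 1 - (i:ℕ)) i ⟨r-1, by omega⟩ (by simp; omega)
      have := hub ⟨r-1, by omega⟩
      omega
    refine ⟨⟨⟨?_, ?_⟩, ?_⟩, ?_⟩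
    · intro i
      simp only [Pi.zero_apply]
      have h1 := hlb i.rev
      have h2 := hrev i
      have hi := i.isLt
      omega
    · intro i
      have h1 := hub2 i.rev
      have h2 := hrev i
      have h3 := hrev i.rev
      have hi := i.isLt
      simp only []
      omega
    · intro i j hij
      dsimp only
      have h1 := strictMono_gap s hsm ((j:ℕ) - (i:ℕ)) j.rev i.rev
        (by rw [hrev, hrev]; have := j.isLt; omega)
      have h2 := hrev i; have h3 := hrev j
      have hi := i.isLt; have hj := j.isLt
      have hle : (i:ℕ) ≤ (j:ℕ) := hij
      omega
    · intro i hi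
      dsimp only
      have h1 : i.rev = (⟨0, by omega⟩ : Fin r) := by
        rw [Fin.ext_iff, Fin.val_rev]; simp; omega
      have h1' : s i.rev = 0 := by rw [h1]; exact hzero
      rw [h1']
      have hi' := i.isLt
      push_cast
      omega
  · -- left inverse
    rintro ⟨μ, π⟩ hp
    rw [Finset.mem_product] at hp
    obtain ⟨hμ, -⟩ := hp
    have hμ : μ ∈ Wk r k := hμ
    set t := tmu r k μ ∘ π with ht
    set w : Fin r → ℕ := fun i => (t i).val with hw
    have hwval : ∀ j, w j = (eexp r μ (π j)).toNat := fun j => tmu_val hμ (π j)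
    have hwinj : Function.Injective w := by
      intro a b hab
      apply π.injective
      by_contra hne
      have h1 := eexp_bounds hμ (π a); have h2 := eexp_bounds hμ (π b)
      have : eexp r μ (π a) = eexp r μ (π b) := by
        rw [hwval, hwval] at hab; omega
      rcases lt_or_gt_of_ne hne with h | h
      · exact absurd this (ne_of_gt (eexp_anti hμ h))
      · exact absurd this (ne_of_lt (eexp_anti hμ h))
    have hc : Fin.revPerm.trans π⁻¹ = Tuple.sort w := by
      rw [Tuple.eq_sort_iff]
      constructor
      · intro a b hab
        simp only [Function.comp_apply, Equiv.trans_apply, Fin.revPerm_apply]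
        rw [hwval, hwval]
        simp only [Equiv.Perm.coe_inv, Equiv.apply_symm_apply]
        have h1 := eexp_bounds hμ a.rev; have h2 := eexp_bounds hμ b.rev
        have hrle : b.rev ≤ a.rev := by
          rw [Fin.le_def, Fin.val_rev, Fin.val_rev]
          have := b.isLt; have : (a:ℕ) ≤ b := hab; omega
        rcases eq_or_lt_of_le hrle with he | hlt
        · rw [he]
        · have := eexp_anti hμ hlt; omega
      · intro a b hab heq
        exfalso
        have h' := hwinj heq
        have hab' : a = b := by
          have h2 := congrArg π h'
          simp only [Equiv.trans_apply, Fin.revPerm_apply, Equiv.Perm.coe_inv, Equiv.apply_symm_apply] at h2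
          exact Fin.rev_injective h2
        exact absurd hab' (ne_of_lt hab)
    have hσ : Tuple.sort (fun i => (t i).val) = Fin.revPerm.trans π⁻¹ := by
      rw [hc]
    rw [Prod.ext_iff]
    constructor
    · show (sortinv r k t).1 = μ
      funext i
      show (((t ((Tuple.sort (fun i => (t i).val)) i.rev)).val : ℕ) : ℤ) - ((r:ℤ) - 1 - (i:ℕ)) = μ i
      rw [hσ]
      simp only [Equiv.trans_apply, Fin.revPerm_apply, Fin.rev_rev]
      have : t (π⁻¹ i) = tmu r k μ i := by rw [ht]; simp
      rw [this, tmu_val hμ]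
      have h0 := (eexp_bounds hμ i).1
      rw [eexp] at h0 ⊢
      omega
    · show (sortinv r k t).2 = π
      have : (sortinv r k t).2 = (Tuple.sort (fun i => (t i).val))⁻¹.trans Fin.revPerm := rfl
      rw [this, hσ]
      ext j
      simp only [Equiv.Perm.inv_def, Equiv.symm_trans_apply, Equiv.trans_apply,
        Fin.revPerm_symm, Fin.revPerm_apply, Fin.rev_rev, Equiv.symm_symm,
        Equiv.Perm.coe_inv, Equiv.apply_symm_apply]
  · -- right inverse
    intro t ht
    funext j
    show tmu r k (sortinv r k t).1 ((sortinv r k t).2 j) = t j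
    set σ := Tuple.sort (fun i => (t i).val) with hσ
    have h2 : (sortinv r k t).2 j = (σ⁻¹ j).rev := rfl
    have h1 : ∀ i, (sortinv r k t).1 i = (((t (σ i.rev)).val : ℕ) : ℤ) - ((r:ℤ) - 1 - (i:ℕ)) :=
      fun i => rfl
    rw [h2, tmu, eexp, h1]
    simp only [Fin.rev_rev]
    rw [show (((t (σ (σ⁻¹ j))).val : ℕ) : ℤ) - ((r:ℤ) - 1 - ((σ⁻¹ j).rev : ℕ)) +
        ((r:ℤ) - 1 - ((σ⁻¹ j).rev : ℕ)) = (((t (σ (σ⁻¹ j))).val : ℕ) : ℤ) by ring]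
    simp only [Equiv.Perm.coe_inv, Equiv.apply_symm_apply]
    push_cast
    exact ZMod.natCast_rightInverse (t j)
  · intro p _; rfl

lemma sum_Wk_F [NeZero (r+k)] (hr : 1 ≤ r) (hk : 1 ≤ k)
    (hdec : ∀ i j : Fin r, i < j → v j < v i)
    (hlow : ∀ i, 0 ≤ v i) (hhigh : ∀ i, v i < (r : ℤ) + (k : ℤ)) :
    ∑ μ ∈ Wk r k, Ffun r k v (tmu r k μ)
      = (r : ℂ) * ((r+k : ℕ) : ℂ) ^ (r-1) := by
  have h := sum_Wk_aux hr hk hdec hlow hhigh (v := v)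
  rw [Finset.sum_product] at h
  have h2 : ∀ μ ∈ Wk r k, (∑ π : Equiv.Perm (Fin r), Ffun r k v (tmu r k μ ∘ π))
      = (Nat.factorial r : ℂ) * Ffun r k v (tmu r k μ) := by
    intro μ _
    rw [Finset.sum_congr rfl (fun π _ => Ffun_perm (tmu r k μ) π), Finset.sum_const,
      Finset.card_univ, Fintype.card_perm, Fintype.card_fin, nsmul_eq_mul]
  rw [Finset.sum_congr rfl h2, ← Finset.mul_sum] at h
  have hfac : (Nat.factorial r : ℂ) ≠ 0 := Nat.cast_ne_zero.2 (Nat.factorial_ne_zero r)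
  apply mul_left_cancel₀ hfac
  rw [h]; ring

noncomputable def ddet (r k : ℕ) (v : Fin r → ℤ) : ℂ :=
  Matrix.det (Matrix.of fun i j : Fin r => zeta r k v j ^ ((r : ℤ) - 1 - (i : ℕ)))

noncomputable def eps (r : ℕ) : ℂ := ((Equiv.Perm.sign (Fin.revPerm : Equiv.Perm (Fin r)) : ℤ) : ℂ)

lemma eps_sq : eps r * eps r = 1 := by
  rw [eps, ← Int.cast_mul, ← Units.val_mul, Int.units_mul_self]; simp

lemma rev_exponent (i : Fin r) : (r : ℤ) - 1 - ((i.rev : ℕ) : ℤ) = (i : ℕ) := by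
  rw [Fin.val_rev]
  have := i.isLt
  push_cast
  omega

lemma ddet_vandermonde (hr : 1 ≤ r) :
    ddet r k v = eps r * ∏ i : Fin r, ∏ j ∈ Finset.Ioi i, (zeta r k v j - zeta r k v i) := by
  rw [ddet, ← Matrix.det_transpose]
  have h1 : Matrix.transpose (Matrix.of fun i j : Fin r => zeta r k v j ^ ((r : ℤ) - 1 - (i : ℕ)))
      = (Matrix.vandermonde (zeta r k v)).submatrix id Fin.revPerm := by
    ext i j
    simp only [Matrix.transpose_apply, Matrix.of_apply, Matrix.submatrix_apply, id_eq,
      Matrix.vandermonde_apply, Fin.revPerm_apply]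
    rw [show (r:ℤ) - 1 - ((j:ℕ):ℤ) = (((j.rev : ℕ)) : ℤ) by
      rw [Fin.val_rev]; have := j.isLt; push_cast; omega]
    rw [zpow_natCast]
  rw [h1, Matrix.det_permute', Matrix.det_vandermonde, eps]

lemma prod_pairs_eq (f : Fin r → Fin r → ℂ) :
    ∏ p ∈ Finset.univ.filter (fun p : Fin r × Fin r => p.1 < p.2), f p.1 p.2
      = ∏ i : Fin r, ∏ j ∈ Finset.Ioi i, f i j := by
  rw [Finset.prod_filter]
  rw [Fintype.prod_prod_type' (fun i j : Fin r => if i < j then f i j else 1)]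
  refine Finset.prod_congr rfl (fun i _ => ?_)
  have h : Finset.univ.filter (fun j : Fin r => i < j) = Finset.Ioi i := by
    ext x; simp
  rw [← h, Finset.prod_filter]

/-- conjugate of ddet -/

lemma conj_ddet (hr : 1 ≤ r) :
    (starRingEnd ℂ) (ddet r k v)
      = ((∏ j, zeta r k v j) ^ ((r:ℕ) - 1))⁻¹ * (eps r * ddet r k v) := by
  rw [ddet, RingHom.map_det]
  have h1 : (starRingEnd ℂ).mapMatrix (Matrix.of fun i j : Fin r =>
        zeta r k v j ^ ((r : ℤ) - 1 - (i : ℕ)))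
      = Matrix.of (fun i j : Fin r => (fun l => (zeta r k v l ^ ((r:ℕ)-1 : ℕ))⁻¹) j *
          (Matrix.of fun i j : Fin r => zeta r k v j ^ (((i : ℕ) : ℤ))) i j) := by
    ext i j
    simp only [RingHom.mapMatrix_apply, Matrix.map_apply, Matrix.of_apply]
    rw [map_zpow₀, conj_zeta, inv_zpow, ← zpow_neg]
    rw [show -((r:ℤ) - 1 - (i:ℕ)) = -(((r:ℕ)-1 : ℕ) : ℤ) + ((i:ℕ) : ℤ) by push_cast; omega]
    rw [zpow_add₀ (zeta_ne_zero j), zpow_neg, zpow_natCast]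
  rw [h1, Matrix.det_mul_row]
  have h2 : ∏ j : Fin r, (zeta r k v j ^ ((r:ℕ)-1 : ℕ))⁻¹
      = ((∏ j, zeta r k v j) ^ ((r:ℕ) - 1))⁻¹ := by
    rw [Finset.prod_inv_distrib, Finset.prod_pow]
  rw [h2]
  congr 1
  -- det (ζ_j ^ i) = eps r * ddet
  have h3 : (Matrix.of fun i j : Fin r => zeta r k v j ^ (((i : ℕ)) : ℤ))
      = (Matrix.of fun i j : Fin r => zeta r k v j ^ ((r : ℤ) - 1 - (i : ℕ))).submatrix
          Fin.revPerm id := by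
    ext i j
    simp only [Matrix.of_apply, Matrix.submatrix_apply, id_eq, Fin.revPerm_apply]
    rw [rev_exponent]
  rw [h3, Matrix.det_permute]; rfl

/-- numerator for μ* -/

lemma numstar (hr : 1 ≤ r) [NeZero (r+k)] {μ : Fin r → ℤ}
    (hb : ∀ i, 0 ≤ eexp r μ i ∧ eexp r μ i < (r:ℤ)+k) :
    Matrix.det (Matrix.of fun i j : Fin r =>
        zeta r k v j ^ (mustar k μ i + ((r : ℤ) - 1 - (i : ℕ))))
      = eps r * (∏ j, zeta r k v j)⁻¹ * (starRingEnd ℂ) (gdet r k v (tmu r k μ)) := by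
  have key : (Matrix.of fun i j : Fin r =>
        zeta r k v j ^ (mustar k μ i + ((r : ℤ) - 1 - (i : ℕ)))).submatrix Fin.revPerm id
      = Matrix.of (fun i j : Fin r => (fun l => (zeta r k v l)⁻¹) j *
          (Matrix.of fun i j : Fin r =>
            (starRingEnd ℂ) (zeta r k v j ^ (tmu r k μ i).val)) i j) := by
    ext i j
    simp only [Matrix.submatrix_apply, Matrix.of_apply, id_eq, Fin.revPerm_apply]
    rw [show mustar k μ i.rev + ((r:ℤ) - 1 - ((i.rev : ℕ) : ℤ))
        = ((r:ℤ)+(k:ℤ)) - 1 - eexp r μ i by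
      rw [mustar, Fin.rev_rev, rev_exponent, eexp]; push_cast; ring]
    rw [map_pow, conj_zeta, inv_pow, ← zpow_natCast (zeta r k v j), tmu_val' hb,
      Int.toNat_of_nonneg (hb i).1, ← zpow_neg]
    rw [show ((r:ℤ)+(k:ℤ)) - 1 - eexp r μ i
        = ((r+k : ℕ) : ℤ) + (-1 + -(eexp r μ i)) by push_cast; ring]
    rw [zpow_add₀ (zeta_ne_zero j), zpow_add₀ (zeta_ne_zero j), zpow_natCast,
      zeta_pow_n hr, one_mul, zpow_neg, zpow_one]
  have h0 : Matrix.det (Matrix.of fun i j : Fin r =>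
        zeta r k v j ^ (mustar k μ i + ((r : ℤ) - 1 - (i : ℕ))))
      = eps r * Matrix.det ((Matrix.of fun i j : Fin r =>
          zeta r k v j ^ (mustar k μ i + ((r : ℤ) - 1 - (i : ℕ)))).submatrix Fin.revPerm id) := by
    rw [Matrix.det_permute, ← mul_assoc, ← eps, eps_sq, one_mul]
  have hc : (starRingEnd ℂ) (gdet r k v (tmu r k μ))
      = Matrix.det (Matrix.of fun i j : Fin r =>
          (starRingEnd ℂ) (zeta r k v j ^ (tmu r k μ i).val)) := by
    rw [gdet, RingHom.map_det]; rfl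
  rw [h0, key, Matrix.det_mul_row, Finset.prod_inv_distrib, ← hc]
  ring

lemma rcast_ne (hr : 1 ≤ r) : ((r:ℝ)+(k:ℝ)) ≠ 0 := by positivity

lemma sub_mul_conj (hr : 1 ≤ r) (i j : Fin r) :
    (zeta r k v i - zeta r k v j) * (starRingEnd ℂ) (zeta r k v i - zeta r k v j)
    = (((2*Real.sin (Real.pi * ((v i:ℝ) - (v j:ℝ)) / ((r:ℝ)+(k:ℝ))))^2 : ℝ) : ℂ) := by
  have hn := ncast_ne (r := r) (k := k) hr
  have hnR := rcast_ne (r := r) (k := k) hr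
  set a : ℝ := Real.pi * ((v i:ℝ) - (v j:ℝ)) / ((r:ℝ)+(k:ℝ)) with ha
  set w : ℂ := zeta r k v i * (starRingEnd ℂ) (zeta r k v j) with hwdef
  have hw : w = Complex.exp (((2*a : ℝ) : ℂ) * Complex.I) := by
    rw [hwdef, zeta]
    show Complex.exp _ * (starRingEnd ℂ) (Complex.exp _) = _
    rw [← Complex.exp_conj, ← Complex.exp_add]
    congr 1
    simp only [map_div₀, map_mul, Complex.conj_I, map_ofNat, Complex.conj_ofReal,
      map_intCast, map_natCast, map_add]
    rw [ha]
    push_cast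
    field_simp
    ring
  have hsum : w + (starRingEnd ℂ) w = ((2 * Real.cos (2*a) : ℝ) : ℂ) := by
    rw [Complex.add_conj, hw, Complex.exp_ofReal_mul_I_re]
  have expand : (zeta r k v i - zeta r k v j) *
        (starRingEnd ℂ) (zeta r k v i - zeta r k v j)
      = (zeta r k v i * (starRingEnd ℂ) (zeta r k v i)
          + zeta r k v j * (starRingEnd ℂ) (zeta r k v j)) - (w + (starRingEnd ℂ) w) := by
    rw [map_sub, hwdef, map_mul]
    have : (starRingEnd ℂ) ((starRingEnd ℂ) (zeta r k v j)) = zeta r k v j :=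
      Complex.conj_conj _
    rw [this]
    ring
  rw [expand, zeta_mul_conj, zeta_mul_conj, hsum]
  have hre : (2 - 2*Real.cos (2*a) : ℝ) = (2*Real.sin a)^2 := by
    nlinarith [Real.sin_sq_eq_half_sub a]
  calc (1 + 1 : ℂ) - ((2 * Real.cos (2*a) : ℝ) : ℂ)
      = ((2 - 2*Real.cos (2*a) : ℝ) : ℂ) := by push_cast; ring
    _ = (((2*Real.sin a)^2 : ℝ) : ℂ) := by rw [hre]

lemma Dv_ne (hr : 1 ≤ r) (hk : 1 ≤ k)
    (hdec : ∀ i j : Fin r, i < j → v j < v i)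
    (hlow : ∀ i, 0 ≤ v i) (hhigh : ∀ i, v i < (r : ℤ) + (k : ℤ)) :
    Dv r k v ≠ 0 := by
  rw [Dv]
  apply Finset.prod_ne_zero_iff.2
  intro p hp
  rw [Finset.mem_filter] at hp
  have hlt := hdec p.1 p.2 hp.2
  have h1 : (0:ℝ) < (v p.1 : ℝ) - (v p.2 : ℝ) := by
    have h : (v p.2 : ℝ) < (v p.1 : ℝ) := by exact_mod_cast hlt
    linarith
  have h2 : (v p.1 : ℝ) - (v p.2 : ℝ) < (r:ℝ) + (k:ℝ) := by
    have ha := hhigh p.1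
    have hb := hlow p.2
    have ha' : (v p.1 : ℝ) < (r:ℝ) + (k:ℝ) := by exact_mod_cast ha
    have hb' : (0:ℝ) ≤ (v p.2 : ℝ) := by exact_mod_cast hb
    linarith
  have hpos : 0 < Real.sin (Real.pi * ((v p.1:ℝ) - (v p.2:ℝ)) / ((r:ℝ)+(k:ℝ))) := by
    apply Real.sin_pos_of_pos_of_lt_pi
    · apply div_pos (mul_pos Real.pi_pos h1) (by positivity)
    · rw [div_lt_iff₀ (by positivity)]
      nlinarith [Real.pi_pos]
  exact pow_ne_zero _ (mul_ne_zero two_ne_zero (ne_of_gt hpos))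

lemma ddet_mul_conj (hr : 1 ≤ r) :
    ddet r k v * (starRingEnd ℂ) (ddet r k v) = ((Dv r k v : ℝ) : ℂ) := by
  rw [ddet_vandermonde hr, map_mul]
  have heps : (starRingEnd ℂ) (eps r) = eps r := by
    rw [eps, map_intCast]
  rw [heps]
  rw [show (eps r * ∏ i : Fin r, ∏ j ∈ Finset.Ioi i, (zeta r k v j - zeta r k v i)) *
      (eps r * (starRingEnd ℂ) (∏ i : Fin r, ∏ j ∈ Finset.Ioi i, (zeta r k v j - zeta r k v i)))
      = (eps r * eps r) * ((∏ i : Fin r, ∏ j ∈ Finset.Ioi i, (zeta r k v j - zeta r k v i)) *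
        (starRingEnd ℂ) (∏ i : Fin r, ∏ j ∈ Finset.Ioi i, (zeta r k v j - zeta r k v i))) by ring]
  rw [eps_sq, one_mul, map_prod, ← Finset.prod_mul_distrib]
  rw [Dv, Complex.ofReal_prod, prod_pairs_eq (fun i j =>
    (((2 * Real.sin (Real.pi * ((v i : ℝ) - (v j : ℝ)) / ((r : ℝ) + (k : ℝ)))) ^ 2 : ℝ) : ℂ))]
  refine Finset.prod_congr rfl (fun i _ => ?_)
  rw [map_prod, ← Finset.prod_mul_distrib]
  refine Finset.prod_congr rfl (fun j hj => ?_)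
  rw [sub_mul_conj hr j i]
  congr 1
  rw [show Real.pi * ((v j:ℝ) - (v i:ℝ)) / ((r:ℝ)+(k:ℝ))
      = -(Real.pi * ((v i:ℝ) - (v j:ℝ)) / ((r:ℝ)+(k:ℝ))) by ring, Real.sin_neg]
  ring

lemma Zp_zpow_neg_r (hr : 1 ≤ r) :
    (∏ j, zeta r k v j) ^ (-(r:ℤ)) = Complex.exp (2 * (Real.pi:ℂ) * Complex.I * (k:ℂ) *
      (∑ i, ((v i : ℤ) : ℂ)) / ((r:ℂ)+(k:ℂ))) := by
  have hn := ncast_ne (r := r) (k := k) hr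
  have hZ : (∏ j, zeta r k v j) = Complex.exp (2 * (Real.pi:ℂ) * Complex.I *
      (∑ i, ((v i : ℤ) : ℂ)) / ((r:ℂ)+(k:ℂ))) := by
    simp only [zeta]
    rw [← Complex.exp_sum]
    congr 1
    rw [← Finset.sum_div, ← Finset.mul_sum]
  rw [hZ, ← Complex.exp_int_mul]
  rw [show ((-(r:ℤ) : ℤ) : ℂ) * (2 * (Real.pi:ℂ) * Complex.I *
        (∑ i, ((v i : ℤ) : ℂ)) / ((r:ℂ)+(k:ℂ)))
      = 2 * (Real.pi:ℂ) * Complex.I * (k:ℂ) * (∑ i, ((v i : ℤ) : ℂ)) / ((r:ℂ)+(k:ℂ))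
        + ((-(∑ i, v i) : ℤ) : ℂ) * (2 * (Real.pi:ℂ) * Complex.I) by
    push_cast
    field_simp
    ring]
  rw [Complex.exp_add, Complex.exp_int_mul_two_pi_mul_I, mul_one]

lemma num_eq [NeZero (r+k)] {μ : Fin r → ℤ}
    (hb : ∀ i, 0 ≤ eexp r μ i ∧ eexp r μ i < (r:ℤ)+k) :
    Matrix.det (Matrix.of fun i j : Fin r =>
        zeta r k v j ^ (μ i + ((r : ℤ) - 1 - (i : ℕ))))
      = gdet r k v (tmu r k μ) := by
  rw [gdet]
  congr 1
  ext i j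
  simp only [Matrix.of_apply]
  rw [show μ i + ((r : ℤ) - 1 - (i : ℕ)) = eexp r μ i from rfl]
  rw [← zpow_natCast, tmu_val' hb, Int.toNat_of_nonneg (hb i).1]

end Aux1

/-- `Σ_{μ∈W_k} S_μ(ζ_v)·S_{μ*}(ζ_v) = e^{2πik|v|/(r+k)} · r(r+k)^{r-1} / D(v)`. -/
theorem sum_Wk_schur_mul_schur_star (r k : ℕ) (hr : 1 ≤ r) (hk : 1 ≤ k)
    (v : Fin r → ℤ) (hdec : ∀ i j : Fin r, i < j → v j < v i)
    (hlow : ∀ i, 0 ≤ v i) (hhigh : ∀ i, v i < (r : ℤ) + (k : ℤ)) :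
    ∑ μ ∈ Wk r k, schur μ (zeta r k v) * schur (mustar k μ) (zeta r k v) =
      Complex.exp (2 * (Real.pi : ℂ) * Complex.I * (k : ℂ) * (∑ i, (v i : ℂ)) /
          ((r : ℂ) + (k : ℂ))) *
        ((r : ℂ) * ((r : ℂ) + (k : ℂ)) ^ (r - 1) / ((Dv r k v : ℝ) : ℂ)) := by
  haveI : NeZero (r+k) := ⟨by omega⟩
  have hDv : Dv r k v ≠ 0 := Dv_ne hr hk hdec hlow hhigh
  have hDvC : ((Dv r k v : ℝ) : ℂ) ≠ 0 := Complex.ofReal_ne_zero.2 hDv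
  have hZ : (∏ j, zeta r k v j) ≠ 0 := Finset.prod_ne_zero_iff.2 (fun j _ => zeta_ne_zero j)
  have hepsne : eps r ≠ 0 := by
    intro h
    have h2 := eps_sq (r := r)
    rw [h, mul_zero] at h2
    exact zero_ne_one h2
  have hA := ddet_mul_conj (k := k) (v := v) hr
  have hB := conj_ddet (k := k) (v := v) hr
  have hd2 : (ddet r k v)^2
      = ((Dv r k v : ℝ):ℂ) * (∏ j, zeta r k v j)^((r:ℕ)-1) * eps r := by
    have h1 : ((Dv r k v : ℝ):ℂ)
        = (ddet r k v)^2 * eps r * ((∏ j, zeta r k v j)^((r:ℕ)-1))⁻¹ := by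
      rw [← hA, hB]; ring
    have h2 : ((Dv r k v:ℝ):ℂ) * (∏ j, zeta r k v j)^((r:ℕ)-1) * eps r
        = (ddet r k v)^2 * (eps r * eps r) *
          (((∏ j, zeta r k v j)^((r:ℕ)-1))⁻¹ * (∏ j, zeta r k v j)^((r:ℕ)-1)) := by
      rw [h1]; ring
    rw [eps_sq, inv_mul_cancel₀ (pow_ne_zero _ hZ), mul_one, mul_one] at h2
    exact h2.symm
  have hterm : ∀ μ ∈ Wk r k, schur μ (zeta r k v) * schur (mustar k μ) (zeta r k v)
      = (eps r * (∏ j, zeta r k v j)⁻¹ / (ddet r k v)^2) * Ffun r k v (tmu r k μ) := by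
    intro μ hμ
    have hb : ∀ i, 0 ≤ eexp r μ i ∧ eexp r μ i < (r:ℤ)+k := fun i => eexp_bounds hμ i
    have e1 : schur μ (zeta r k v) = gdet r k v (tmu r k μ) / ddet r k v := by
      rw [schur, num_eq hb]; rfl
    have e2 : schur (mustar k μ) (zeta r k v)
        = (eps r * (∏ j, zeta r k v j)⁻¹ *
            (starRingEnd ℂ) (gdet r k v (tmu r k μ))) / ddet r k v := by
      rw [schur, numstar hr hb]; rfl
    rw [e1, e2, Ffun]
    ring
  rw [Finset.sum_congr rfl hterm, ← Finset.mul_sum, sum_Wk_F hr hk hdec hlow hhigh]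
  have hsplit : (∏ j, zeta r k v j) ^ r
      = (∏ j, zeta r k v j) * (∏ j, zeta r k v j)^(r-1) := by
    obtain ⟨m, hm⟩ : ∃ m, r = m + 1 := ⟨r-1, by omega⟩
    generalize (∏ j, zeta r k v j) = Z
    rw [hm]
    simp [pow_succ]
    ring
  have hZr : eps r * (∏ j, zeta r k v j)⁻¹ / (ddet r k v)^2
      = ((∏ j, zeta r k v j) ^ (-(r:ℤ))) / ((Dv r k v : ℝ):ℂ) := by
    rw [hd2, zpow_neg, zpow_natCast, hsplit, mul_inv]
    rw [div_eq_div_iff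
      (mul_ne_zero (mul_ne_zero hDvC (pow_ne_zero _ hZ)) hepsne) hDvC]
    have hcan : ((∏ j, zeta r k v j)^(r-1))⁻¹ * (∏ j, zeta r k v j)^(r-1) = 1 :=
      inv_mul_cancel₀ (pow_ne_zero _ hZ)
    linear_combination (-(eps r * (∏ j, zeta r k v j)⁻¹ * ((Dv r k v : ℝ):ℂ))) * hcan
  rw [hZr, Zp_zpow_neg_r hr]
  have hcast : ((r+k:ℕ):ℂ) = (r:ℂ)+(k:ℂ) := by push_cast; ring
  rw [hcast]
  ring
end VerlindePaper
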